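/- arXiv:1001.0886 — 2 statements merged into one kernel-verified Lean document; each statement's English description precedes it below -/
import Mathlib

section
/- Let G be a graph admitting a map ρ from its vertices to points on a circle of radius 1/√3 in the plane such that adjacent vertices are mapped to points at Euclidean distance exactly 1. Then the chromatic number of G is at most 3. -/
open Complex Real

private lemma key_angle {a b : ℂ} (ha : ‖a‖ = 1) (hb : ‖b‖ = 1)
    (hab : ‖a - b‖ = Real.sqrt 3) :
    ((Complex.arg a : Real.Angle) - Complex.arg b = ((2*π/3 : ℝ) : Real.Angle)) ∨
    ((Complex.arg a : Real.Angle) - Complex.arg b = ((-(2*π/3) : ℝ) : Real.Angle)) := by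
  have ha0 : a ≠ 0 := by intro h; simp [h] at ha
  have hb0 : b ≠ 0 := by intro h; simp [h] at hb
  set q : ℂ := a / b with hq
  have hq0 : q ≠ 0 := div_ne_zero ha0 hb0
  have hqabs : ‖q‖ = 1 := by simp [hq, norm_div, ha, hb]
  have hq1 : ‖q - 1‖ = Real.sqrt 3 := by
    have : q - 1 = (a - b) / b := by rw [hq, sub_div, div_self hb0]
    rw [this, norm_div, hb, div_one, hab]
  have hnsq : Complex.normSq q = 1 := by
    have := Complex.sq_norm q; rw [hqabs] at this; linarith [this]
  have hnsq1 : Complex.normSq (q - 1) = 3 := by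
    have := Complex.sq_norm (q - 1)
    rw [hq1, Real.sq_sqrt (by norm_num : (3:ℝ) ≥ 0)] at this
    linarith
  have hre : q.re = -1/2 := by
    have h1 : Complex.normSq (q - 1) = Complex.normSq q - 2 * q.re + 1 := by
      simp [Complex.normSq_apply, Complex.sub_re, Complex.sub_im]; ring
    rw [hnsq1, hnsq] at h1; linarith
  have him : q.im = Real.sqrt 3 / 2 ∨ q.im = -(Real.sqrt 3 / 2) := by
    have h2 : q.im ^ 2 = (Real.sqrt 3 / 2) ^ 2 := by
      have := hnsq
      rw [Complex.normSq_apply, hre] at this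
      rw [div_pow, Real.sq_sqrt (by norm_num : (3:ℝ) ≥ 0)]
      nlinarith
    exact sq_eq_sq_iff_eq_or_eq_neg.mp h2
  have harg : Complex.arg q = 2*π/3 ∨ Complex.arg q = -(2*π/3) := by
    have hc : Real.cos (2*π/3) = -1/2 := by
      have : (2*π/3 : ℝ) = π - π/3 := by ring
      rw [this, Real.cos_pi_sub, Real.cos_pi_div_three]; norm_num
    have hs : Real.sin (2*π/3) = Real.sqrt 3 / 2 := by
      have : (2*π/3 : ℝ) = π - π/3 := by ring
      rw [this, Real.sin_pi_sub, Real.sin_pi_div_three]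
    have hmem : (2*π/3 : ℝ) ∈ Set.Ioc (-π) π := by
      constructor <;> nlinarith [Real.pi_pos]
    have hmem' : (-(2*π/3) : ℝ) ∈ Set.Ioc (-π) π := by
      constructor <;> nlinarith [Real.pi_pos]
    rcases him with h | h
    · left
      have : q = Complex.ofReal (Real.cos (2*π/3)) + Complex.ofReal (Real.sin (2*π/3)) * Complex.I := by
        apply Complex.ext <;> simp [hre, h, hc, hs]
      rw [this, Complex.ofReal_cos, Complex.ofReal_sin, Complex.arg_cos_add_sin_mul_I hmem]
    · right
      have : q = Complex.ofReal (Real.cos (-(2*π/3))) + Complex.ofReal (Real.sin (-(2*π/3))) * Complex.I := by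
        apply Complex.ext <;> simp [hre, h, hc, hs]
      rw [this, Complex.ofReal_cos, Complex.ofReal_sin, Complex.arg_cos_add_sin_mul_I hmem']
  have hdiv := Complex.arg_div_coe_angle ha0 hb0
  rcases harg with h | h
  · left; rw [← hdiv, ← hq, h]
  · right; rw [← hdiv, ← hq, h]

theorem circle_representation_chromatic_le_three {V : Type*} [Fintype V]
    (G : SimpleGraph V) (s : EuclideanSpace ℝ (Fin 2))
    (ρ : V → EuclideanSpace ℝ (Fin 2))
    (hsph : ∀ v, ‖ρ v - s‖ = 1 / Real.sqrt 3)
    (hedge : ∀ u v, G.Adj u v → dist (ρ u) (ρ v) = 1) :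
    G.chromaticNumber ≤ 3 := by
  have hnorm : ∀ x y : EuclideanSpace ℝ (Fin 2),
      ‖x - y‖ = ‖(x 0 + x 1 * Complex.I) - (y 0 + y 1 * Complex.I)‖ := by
    intro x y
    rw [EuclideanSpace.norm_eq, Complex.norm_def, Complex.normSq_apply]
    congr 1
    simp [Fin.sum_univ_two, Real.norm_eq_abs, sq_abs]
    ring
  set z : V → ℂ := fun v => (ρ v 0 : ℝ) + (ρ v 1) * Complex.I with hz
  set c : ℂ := (s 0 : ℝ) + (s 1) * Complex.I with hc
  have hs3 : (0:ℝ) < Real.sqrt 3 := Real.sqrt_pos.mpr (by norm_num)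
  set w : V → ℂ := fun v => (Real.sqrt 3 : ℝ) * (z v - c) with hw
  have habs : ∀ v, ‖w v‖ = 1 := by
    intro v
    have h1 : ‖z v - c‖ = 1 / Real.sqrt 3 := by
      rw [← hsph v, hnorm (ρ v) s]
    simp only [hw, norm_mul, Complex.norm_real, Real.norm_eq_abs, abs_of_pos hs3, h1]
    field_simp
  have hedge' : ∀ u v, G.Adj u v → ‖w u - w v‖ = Real.sqrt 3 := by
    intro u v huv
    have h1 : ‖z u - z v‖ = 1 := by
      rw [← hedge u v huv, dist_eq_norm, hnorm (ρ u) (ρ v)]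
    have h2 : w u - w v = (Real.sqrt 3 : ℝ) * (z u - z v) := by
      simp only [hw]; ring
    rw [h2, norm_mul, Complex.norm_real, Real.norm_eq_abs, abs_of_pos hs3, h1, mul_one]
  -- the coloring
  set C : V → ZMod 3 := fun v => ((⌊Complex.arg (w v) * (3 / (2*π))⌋ : ℤ) : ZMod 3) with hC
  have hvalid : ∀ u v, G.Adj u v → C u ≠ C v := by
    intro u v huv
    have hkey := key_angle (habs u) (habs v) (hedge' u v huv)
    have hπ : (π : ℝ) ≠ 0 := Real.pi_ne_zero
    have main : ∀ ε : ℝ, (ε = 1 ∨ ε = -1) →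
        Complex.arg (w u) - Complex.arg (w v) - ε * (2*π/3) = 2 * π * (0:ℝ) → True := fun _ _ _ => trivial
    rcases hkey with h | h
    · rw [← Real.Angle.coe_sub, Real.Angle.angle_eq_iff_two_pi_dvd_sub] at h
      obtain ⟨k, hk⟩ := h
      have hmul : Complex.arg (w u) * (3 / (2*π)) =
          Complex.arg (w v) * (3 / (2*π)) + ((1 + 3*k : ℤ) : ℝ) := by
        have : Complex.arg (w u) = Complex.arg (w v) + 2*π/3 + 2*π*k := by linarith
        rw [this]; push_cast; field_simp; ring
      have hfloor : ⌊Complex.arg (w u) * (3 / (2*π))⌋ =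
          ⌊Complex.arg (w v) * (3 / (2*π))⌋ + (1 + 3*k) := by
        rw [hmul, Int.floor_add_intCast]
      simp only [hC, hfloor]
      push_cast
      intro hcontra
      have h3 : (3 : ZMod 3) * (k : ZMod 3) = 0 := by
        rw [show (3:ZMod 3) = 0 from rfl, zero_mul]
      have : (1 : ZMod 3) = 0 := by linear_combination hcontra - h3
      exact one_ne_zero this
    · rw [← Real.Angle.coe_sub, Real.Angle.angle_eq_iff_two_pi_dvd_sub] at h
      obtain ⟨k, hk⟩ := h
      have hmul : Complex.arg (w u) * (3 / (2*π)) =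
          Complex.arg (w v) * (3 / (2*π)) + ((-1 + 3*k : ℤ) : ℝ) := by
        have : Complex.arg (w u) = Complex.arg (w v) - 2*π/3 + 2*π*k := by linarith
        rw [this]; push_cast; field_simp; ring
      have hfloor : ⌊Complex.arg (w u) * (3 / (2*π))⌋ =
          ⌊Complex.arg (w v) * (3 / (2*π))⌋ + (-1 + 3*k) := by
        rw [hmul, Int.floor_add_intCast]
      simp only [hC, hfloor]
      push_cast
      intro hcontra
      have h3 : (3 : ZMod 3) * (k : ZMod 3) = 0 := by
        rw [show (3:ZMod 3) = 0 from rfl, zero_mul]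
      have : (-1 : ZMod 3) = 0 := by linear_combination hcontra - h3
      revert this; decide
  have col : G.Coloring (ZMod 3) := SimpleGraph.Coloring.mk C (fun {u v} h => hvalid u v h)
  have : G.Colorable 3 := by
    have := col.colorable
    simpa using this
  simpa using this.chromaticNumber_le
end

section
/- For k ≥ 1, the join of the complete graph K_k with two isolated vertices (i.e., K_k + {v, w} where v, w are each adjacent to all of K_k but not to each other) admits an injective unit-distance representation in ℝ^k, but admits none in ℝ^{k−1}. -/
/-- The join of `K_k` with two isolated vertices: the `inl` vertices form a complete
graph, each of the two `inr` vertices is adjacent to all `inl` vertices, and the two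
`inr` vertices are not adjacent to each other. -/
def completeJoinTwo (k : ℕ) : SimpleGraph (Fin k ⊕ Fin 2) :=
  SimpleGraph.fromRel (fun a b => a.isLeft ∨ b.isLeft)

lemma join_dim_exists (k : ℕ) (hk : 1 ≤ k) :
    (∃ ρ : (Fin k ⊕ Fin 2) → EuclideanSpace ℝ (Fin k),
      Function.Injective ρ ∧
      ∀ a b, (completeJoinTwo k).Adj a b → dist (ρ a) (ρ b) = 1) := by
  have hk0 : (0:ℝ) < k := by exact_mod_cast hk
  set a : ℝ := Real.sqrt 2 with ha_def
  set D : ℝ := Real.sqrt (2 + 2 * k) with hD_def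
  have ha2 : a ^ 2 = 2 := Real.sq_sqrt (by norm_num)
  have hapos : 0 < a := Real.sqrt_pos.mpr (by norm_num)
  have hD2 : D ^ 2 = 2 + 2 * k := Real.sq_sqrt (by positivity)
  have hDpos : 0 < D := Real.sqrt_pos.mpr (by positivity)
  set c : Fin 2 → ℝ := fun r => (a + (if r = 0 then D else -D)) / (2 * k) with hc_def
  have hk0' : (2 * (k:ℝ)) ≠ 0 := by positivity
  have hquad : ∀ r : Fin 2, (k:ℝ) * (c r) ^ 2 - a * (c r) = 1 / 2 := by
    intro r
    fin_cases r <;> simp only [hc_def, Fin.zero_eta, Fin.mk_one, Fin.isValue, one_ne_zero, if_true, if_false] <;>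
      · field_simp
        nlinarith [ha2, hD2]
  have hc01 : c 0 ≠ c 1 := by
    intro h
    simp only [hc_def] at h
    norm_num at h
    rw [div_eq_div_iff hk0' hk0'] at h
    nlinarith [hDpos]
  set ρ : (Fin k ⊕ Fin 2) → EuclideanSpace ℝ (Fin k) :=
    fun x => match x with
      | .inl i => WithLp.toLp 2 (fun j => if j = i then a / 2 else 0 : Fin k → ℝ)
      | .inr r => WithLp.toLp 2 (fun _ => c r : Fin k → ℝ) with hρ_def
  have hll : ∀ i j : Fin k, i ≠ j → dist (ρ (.inl i)) (ρ (.inl j)) = 1 := by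
    intro i j hij
    rw [EuclideanSpace.dist_eq]
    have habs : |a / 2 - (0:ℝ)| = a / 2 := by
      rw [sub_zero]; exact abs_of_pos (by positivity)
    have habs' : |(0:ℝ) - a / 2| = a / 2 := by
      rw [abs_sub_comm]; exact habs
    have hsum : ∑ m : Fin k,
        dist ((if m = i then a / 2 else 0)) ((if m = j then a / 2 else 0)) ^ 2
        = ∑ m : Fin k, ((if m = i then (1:ℝ)/2 else 0) + (if m = j then (1:ℝ)/2 else 0)) := by
      apply Finset.sum_congr rfl
      intro m _
      rcases eq_or_ne m i with rfl | hmi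
      · rw [if_pos rfl, if_neg hij, if_pos rfl, if_neg hij, Real.dist_eq, habs]
        nlinarith [ha2]
      · rw [if_neg hmi, if_neg hmi]
        rcases eq_or_ne m j with rfl | hmj
        · rw [if_pos rfl, if_pos rfl, Real.dist_eq, habs']
          nlinarith [ha2]
        · simp [hmj]
    rw [show (ρ (.inl i)) = (fun j => if j = i then a / 2 else 0 : Fin k → ℝ) from rfl,
        show (ρ (.inl j)) = (fun m => if m = j then a / 2 else 0 : Fin k → ℝ) from rfl]
    rw [hsum, Finset.sum_add_distrib, Finset.sum_ite_eq' Finset.univ i fun _ => (1:ℝ)/2,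
        Finset.sum_ite_eq' Finset.univ j fun _ => (1:ℝ)/2]
    norm_num
  have hlr : ∀ (i : Fin k) (r : Fin 2), dist (ρ (.inl i)) (ρ (.inr r)) = 1 := by
    intro i r
    rw [EuclideanSpace.dist_eq]
    have hsum : ∑ m : Fin k,
        dist ((if m = i then a / 2 else 0)) (c r) ^ 2
        = ∑ m : Fin k, ((if m = i then (a/2 - c r)^2 - (c r)^2 else 0) + (c r)^2) := by
      apply Finset.sum_congr rfl
      intro m _
      rcases eq_or_ne m i with rfl | hmi
      · rw [if_pos rfl, if_pos rfl, Real.dist_eq, sq_abs]; ring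
      · rw [if_neg hmi, if_neg hmi, Real.dist_eq, sq_abs]; ring
    rw [show (ρ (.inl i)) = (fun j => if j = i then a / 2 else 0 : Fin k → ℝ) from rfl,
        show (ρ (.inr r)) = (fun _ => c r : Fin k → ℝ) from rfl]
    rw [hsum, Finset.sum_add_distrib, Finset.sum_ite_eq' Finset.univ i
          fun _ => (a/2 - c r)^2 - (c r)^2,
        Finset.sum_const, Finset.card_univ, Fintype.card_fin, nsmul_eq_mul]
    simp only [Finset.mem_univ, if_pos]
    have hval : (a/2 - c r)^2 - (c r)^2 + (k:ℝ) * (c r)^2 = 1 := by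
      have h := hquad r
      nlinarith [ha2]
    rw [hval, Real.sqrt_one]
  have hdist : ∀ x y, (completeJoinTwo k).Adj x y → dist (ρ x) (ρ y) = 1 := by
    rintro (i | r) (j | s) hadj
    · apply hll
      intro h; subst h
      exact (completeJoinTwo k).loopless.irrefl _ hadj
    · exact hlr i s
    · rw [dist_comm]; exact hlr j r
    · exfalso
      simp [completeJoinTwo, SimpleGraph.fromRel_adj] at hadj
  refine ⟨ρ, ?_, hdist⟩
  intro x y hxy
  by_contra hne
  have hzero : dist (ρ x) (ρ y) = 0 := by rw [hxy, dist_self]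
  rcases x with i | r <;> rcases y with j | s
  · have : (completeJoinTwo k).Adj (.inl i) (.inl j) := by
      simp only [completeJoinTwo, SimpleGraph.fromRel_adj]
      constructor
      · intro h; exact hne h
      · left; left; rfl
    rw [hdist _ _ this] at hzero; norm_num at hzero
  · rw [hlr i s] at hzero; norm_num at hzero
  · rw [dist_comm, hlr j r] at hzero; norm_num at hzero
  · have h0 : c r = c s := congrArg (fun v => v ⟨0, hk⟩) hxy
    have hrs : r ≠ s := fun h => hne (by rw [h])
    fin_cases r <;> fin_cases s
    · exact hrs rfl
    · exact hc01 h0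
    · exact hc01 h0.symm
    · exact hrs rfl

lemma join_dim_not (k : ℕ) (hk : 1 ≤ k) :
    ¬ (∃ ρ : (Fin k ⊕ Fin 2) → EuclideanSpace ℝ (Fin (k - 1)),
      Function.Injective ρ ∧
      ∀ a b, (completeJoinTwo k).Adj a b → dist (ρ a) (ρ b) = 1) := by
  rintro ⟨ρ, _, hdist⟩
  set q : Fin k → EuclideanSpace ℝ (Fin (k - 1)) :=
    fun i => ρ (.inl i) - ρ (.inr 0) with hq
  have hadj1 : ∀ i : Fin k, (completeJoinTwo k).Adj (.inl i) (.inr 0) := by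
    intro i; simp [completeJoinTwo]
  have hnorm : ∀ i, ‖q i‖ = 1 := by
    intro i
    rw [hq]; simp only
    rw [← dist_eq_norm]
    exact hdist _ _ (hadj1 i)
  have hsub : ∀ i j, i ≠ j → ‖q i - q j‖ = 1 := by
    intro i j hij
    have h1 : q i - q j = ρ (.inl i) - ρ (.inl j) := by simp only [hq]; abel
    rw [h1, ← dist_eq_norm]
    exact hdist _ _ (by simp [completeJoinTwo, hij])
  have hinner : ∀ i j, (inner ℝ (q i) (q j) : ℝ) = if i = j then 1 else 1/2 := by
    intro i j
    rcases eq_or_ne i j with rfl | hij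
    · rw [if_pos rfl, real_inner_self_eq_norm_sq, hnorm]; norm_num
    · rw [if_neg hij]
      have h1 : ‖q i - q j‖ ^ 2 = ‖q i‖ ^ 2 - 2 * inner ℝ (q i) (q j) + ‖q j‖ ^ 2 :=
        norm_sub_sq_real _ _
      rw [hnorm i, hnorm j, hsub i j hij] at h1
      linarith
  have hli : LinearIndependent ℝ q := by
    rw [Fintype.linearIndependent_iff]
    intro g hg
    have hcj : ∀ j, g j = - ∑ i, g i := by
      intro j
      have h0 : (∑ i, g i * (inner ℝ (q i) (q j) : ℝ)) = 0 := by
        have h1 : (inner ℝ (∑ i, g i • q i) (q j) : ℝ) = 0 := by rw [hg, inner_zero_left]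
        rw [sum_inner] at h1
        simp only [real_inner_smul_left] at h1
        exact h1
      have h2 : (∑ i, g i * (inner ℝ (q i) (q j) : ℝ))
          = (∑ i, g i) / 2 + g j / 2 := by
        have h3 : ∀ i : Fin k, g i * (inner ℝ (q i) (q j) : ℝ)
            = g i / 2 + (if i = j then g i / 2 else 0) := by
          intro i
          rcases eq_or_ne i j with rfl | hij
          · rw [hinner, if_pos rfl, if_pos rfl]; ring
          · rw [hinner, if_neg hij, if_neg hij]; ring
        rw [Finset.sum_congr rfl fun i _ => h3 i, Finset.sum_add_distrib,
            Finset.sum_ite_eq' Finset.univ j fun i => g i / 2]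
        simp [Finset.sum_div]
      rw [h2] at h0
      linarith
    have hS : (∑ i, g i) = 0 := by
      have h2 : (∑ j, g j) = ∑ _j : Fin k, (-(∑ i, g i)) :=
        Finset.sum_congr rfl fun j _ => hcj j
      rw [Finset.sum_const, Finset.card_univ, Fintype.card_fin, nsmul_eq_mul] at h2
      have hk0 : (0:ℝ) < k := by exact_mod_cast hk
      nlinarith
    intro j
    rw [hcj j, hS, neg_zero]
  have hcard := hli.fintype_card_le_finrank
  rw [Fintype.card_fin, finrank_euclideanSpace_fin] at hcard
  omega

theorem join_dimension (k : ℕ) (hk : 1 ≤ k) :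
    (∃ ρ : (Fin k ⊕ Fin 2) → EuclideanSpace ℝ (Fin k),
      Function.Injective ρ ∧
      ∀ a b, (completeJoinTwo k).Adj a b → dist (ρ a) (ρ b) = 1) ∧
    ¬ (∃ ρ : (Fin k ⊕ Fin 2) → EuclideanSpace ℝ (Fin (k - 1)),
      Function.Injective ρ ∧
      ∀ a b, (completeJoinTwo k).Adj a b → dist (ρ a) (ρ b) = 1) :=
  ⟨join_dim_exists k hk, join_dim_not k hk⟩
end
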